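/- If A and all formulas of Γ contain no occurrence of → and ∀, and A has the form ¬B, then Γ ⊢_NK ¬B if and only if Γ ⊢_NM ¬B. -/
import Mathlib


/-- First-order terms: variables (de Bruijn style indices for bound variables
are merged with free variable indices) and function symbols with arguments. -/
inductive Term where
  | var : ℕ → Term
  | fn : ℕ → (ℕ → Term) → Term

/-- Lift (shift by one) all variables ≥ k. -/
def Term.lift (k : ℕ) : Term → Term
  | .var n => .var (if n < k then n else n + 1)
  | .fn f a => .fn f (fun i => (a i).lift k)

/-- Capture-avoiding substitution of the term `s` for variable `k` (de Bruijn). -/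
def Term.subst (k : ℕ) (s : Term) : Term → Term
  | .var n => if n < k then .var n else if n = k then s else .var (n - 1)
  | .fn f a => .fn f (fun i => Term.subst k s (a i))

/-- Free variables of a term. -/
def Term.fv : Term → Set ℕ
  | .var n => {n}
  | .fn _ a => ⋃ i, (a i).fv

/-- First-order formulas with primitive negation, de Bruijn binders. -/
inductive Formula where
  | pred : ℕ → (ℕ → Term) → Formula
  | bot : Formula
  | top : Formula
  | neg : Formula → Formula
  | conj : Formula → Formula → Formula
  | disj : Formula → Formula → Formula
  | impl : Formula → Formula → Formula
  | all : Formula → Formula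
  | ex : Formula → Formula

def Formula.lift (k : ℕ) : Formula → Formula
  | .pred r a => .pred r (fun i => (a i).lift k)
  | .bot => .bot
  | .top => .top
  | .neg A => .neg (A.lift k)
  | .conj A B => .conj (A.lift k) (B.lift k)
  | .disj A B => .disj (A.lift k) (B.lift k)
  | .impl A B => .impl (A.lift k) (B.lift k)
  | .all A => .all (A.lift (k + 1))
  | .ex A => .ex (A.lift (k + 1))

/-- Capture-avoiding substitution of term `s` for variable `k` in a formula. -/
def Formula.subst (k : ℕ) (s : Term) : Formula → Formula
  | .pred r a => .pred r (fun i => Term.subst k s (a i))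
  | .bot => .bot
  | .top => .top
  | .neg A => .neg (A.subst k s)
  | .conj A B => .conj (A.subst k s) (B.subst k s)
  | .disj A B => .disj (A.subst k s) (B.subst k s)
  | .impl A B => .impl (A.subst k s) (B.subst k s)
  | .all A => .all (A.subst (k + 1) (s.lift 0))
  | .ex A => .ex (A.subst (k + 1) (s.lift 0))

/-- Free variables of a formula. -/
def Formula.fv : Formula → Set ℕ
  | .pred _ a => ⋃ i, (a i).fv
  | .bot => ∅
  | .top => ∅
  | .neg A => A.fv
  | .conj A B => A.fv ∪ B.fv
  | .disj A B => A.fv ∪ B.fv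
  | .impl A B => A.fv ∪ B.fv
  | .all A => {n | n + 1 ∈ A.fv}
  | .ex A => {n | n + 1 ∈ A.fv}

/-- Object-level biconditional, as a defined connective. -/
def Formula.fIff (A B : Formula) : Formula := .conj (.impl A B) (.impl B A)

/-- `A` contains no occurrence of the universal quantifier ∀. -/
def Formula.forallFree : Formula → Prop
  | .pred _ _ => True
  | .bot => True
  | .top => True
  | .neg A => A.forallFree
  | .conj A B => A.forallFree ∧ B.forallFree
  | .disj A B => A.forallFree ∧ B.forallFree
  | .impl A B => A.forallFree ∧ B.forallFree
  | .all _ => False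
  | .ex A => A.forallFree

/-- `A` contains no occurrence of implication →. -/
def Formula.impFree : Formula → Prop
  | .pred _ _ => True
  | .bot => True
  | .top => True
  | .neg A => A.impFree
  | .conj A B => A.impFree ∧ B.impFree
  | .disj A B => A.impFree ∧ B.impFree
  | .impl _ _ => False
  | .all A => A.impFree
  | .ex A => A.impFree

/-- The minimal translation (·)^m. -/
def Formula.mtr : Formula → Formula
  | .pred r a => .pred r a
  | .bot => .bot
  | .top => .top
  | .neg A => .neg A.mtr
  | .conj A B => .conj A.mtr B.mtr
  | .disj A B => .disj A.mtr B.mtr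
  | .impl A B => .disj (.neg A.mtr) B.mtr
  | .all A => .neg (.ex (.neg A.mtr))
  | .ex A => .ex A.mtr

/-- The intuitionistic translation (·)^j. -/
def Formula.jtr : Formula → Formula
  | .pred r a => .pred r a
  | .bot => .bot
  | .top => .top
  | .neg A => .neg A.jtr
  | .conj A B => .conj A.jtr B.jtr
  | .disj A B => .disj A.jtr B.jtr
  | .impl A B => .impl A.jtr B.jtr
  | .all A => .neg (.ex (.neg A.jtr))
  | .ex A => .ex A.jtr

/-- Negative formulas: built from negated atoms, ⊥, ⊤ using only ¬, ∧, →, ∀. -/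
inductive Formula.Negative : Formula → Prop where
  | negAtom : ∀ r a, Formula.Negative (.neg (.pred r a))
  | bot : Formula.Negative .bot
  | top : Formula.Negative .top
  | neg : ∀ {A}, Formula.Negative A → Formula.Negative (.neg A)
  | conj : ∀ {A B}, Formula.Negative A → Formula.Negative B → Formula.Negative (.conj A B)
  | impl : ∀ {A B}, Formula.Negative A → Formula.Negative B → Formula.Negative (.impl A B)
  | all : ∀ {A}, Formula.Negative A → Formula.Negative (.all A)

/-- Natural deduction derivability; the flags `efq`, `raa` tell whether the
ex falso quodlibet and reductio ad absurdum rules are available.  `Deriv efq raa Γ A`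
means `A` is derivable with undischarged assumptions among `Γ`. -/
inductive Deriv (efq raa : Bool) : Set Formula → Formula → Prop where
  | hyp : ∀ {Γ A}, A ∈ Γ → Deriv efq raa Γ A
  | topI : ∀ {Γ}, Deriv efq raa Γ .top
  | negI : ∀ {Γ A}, Deriv efq raa (insert A Γ) .bot → Deriv efq raa Γ (.neg A)
  | negE : ∀ {Γ A}, Deriv efq raa Γ (.neg A) → Deriv efq raa Γ A → Deriv efq raa Γ .bot
  | conjI : ∀ {Γ A B}, Deriv efq raa Γ A → Deriv efq raa Γ B → Deriv efq raa Γ (.conj A B)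
  | conjE1 : ∀ {Γ A B}, Deriv efq raa Γ (.conj A B) → Deriv efq raa Γ A
  | conjE2 : ∀ {Γ A B}, Deriv efq raa Γ (.conj A B) → Deriv efq raa Γ B
  | disjI1 : ∀ {Γ A B}, Deriv efq raa Γ A → Deriv efq raa Γ (.disj A B)
  | disjI2 : ∀ {Γ A B}, Deriv efq raa Γ B → Deriv efq raa Γ (.disj A B)
  | disjE : ∀ {Γ A B C}, Deriv efq raa Γ (.disj A B) → Deriv efq raa (insert A Γ) C →
      Deriv efq raa (insert B Γ) C → Deriv efq raa Γ C
  | implI : ∀ {Γ A B}, Deriv efq raa (insert A Γ) B → Deriv efq raa Γ (.impl A B)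
  | implE : ∀ {Γ A B}, Deriv efq raa Γ (.impl A B) → Deriv efq raa Γ A → Deriv efq raa Γ B
  | allI : ∀ {Γ A}, Deriv efq raa (Formula.lift 0 '' Γ) A → Deriv efq raa Γ (.all A)
  | allE : ∀ {Γ A} (t : Term), Deriv efq raa Γ (.all A) → Deriv efq raa Γ (A.subst 0 t)
  | exI : ∀ {Γ A} (t : Term), Deriv efq raa Γ (A.subst 0 t) → Deriv efq raa Γ (.ex A)
  | exE : ∀ {Γ A C}, Deriv efq raa Γ (.ex A) →
      Deriv efq raa (insert A (Formula.lift 0 '' Γ)) (C.lift 0) → Deriv efq raa Γ C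
  | efqR : ∀ {Γ A}, efq = true → Deriv efq raa Γ .bot → Deriv efq raa Γ A
  | raaR : ∀ {Γ A}, raa = true → Deriv efq raa (insert (.neg A) Γ) .bot → Deriv efq raa Γ A

/-- Minimal natural deduction. -/
def NM : Set Formula → Formula → Prop := Deriv false false
/-- Intuitionistic natural deduction. -/
def NJ : Set Formula → Formula → Prop := Deriv true false
/-- Classical natural deduction (minimal + reductio ad absurdum). -/
def NK : Set Formula → Formula → Prop := Deriv false true

/-! ### Auxiliary lemmas -/

/-- Weakening. -/
lemma Deriv.weaken {e r : Bool} {Γ Δ : Set Formula} {A : Formula}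
    (h : Deriv e r Γ A) (hs : Γ ⊆ Δ) : Deriv e r Δ A := by
  induction h generalizing Δ with
  | hyp hm => exact .hyp (hs hm)
  | topI => exact .topI
  | negI _ ih => exact .negI (ih (Set.insert_subset_insert hs))
  | negE _ _ ih1 ih2 => exact .negE (ih1 hs) (ih2 hs)
  | conjI _ _ ih1 ih2 => exact .conjI (ih1 hs) (ih2 hs)
  | conjE1 _ ih => exact .conjE1 (ih hs)
  | conjE2 _ ih => exact .conjE2 (ih hs)
  | disjI1 _ ih => exact .disjI1 (ih hs)
  | disjI2 _ ih => exact .disjI2 (ih hs)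
  | disjE _ _ _ ih1 ih2 ih3 =>
      exact .disjE (ih1 hs) (ih2 (Set.insert_subset_insert hs))
        (ih3 (Set.insert_subset_insert hs))
  | implI _ ih => exact .implI (ih (Set.insert_subset_insert hs))
  | implE _ _ ih1 ih2 => exact .implE (ih1 hs) (ih2 hs)
  | allI _ ih => exact .allI (ih (Set.image_mono hs))
  | allE t _ ih => exact .allE t (ih hs)
  | exI t _ ih => exact .exI t (ih hs)
  | exE _ _ ih1 ih2 =>
      exact .exE (ih1 hs) (ih2 (Set.insert_subset_insert (Set.image_mono hs)))
  | efqR he _ ih => exact .efqR he (ih hs)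
  | raaR hr _ ih => exact .raaR hr (ih (Set.insert_subset_insert hs))

/-- Double-negation introduction. -/
lemma Deriv.dni {e r : Bool} {Γ : Set Formula} {A : Formula}
    (h : Deriv e r Γ A) : Deriv e r Γ (.neg (.neg A)) :=
  .negI (.negE (.hyp (Set.mem_insert _ _)) (h.weaken (Set.subset_insert _ _)))

/-- From ¬¬⊥ we get ⊥ (minimally). -/
lemma Deriv.ofNNbot {e r : Bool} {Γ : Set Formula}
    (h : Deriv e r Γ (.neg (.neg .bot))) : Deriv e r Γ .bot :=
  h.negE (.negI (.hyp (Set.mem_insert _ _)))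

/-- Monadic bind for double negation (minimally valid). -/
lemma Deriv.bindNN {e r : Bool} {Γ : Set Formula} {A C : Formula}
    (h1 : Deriv e r Γ (.neg (.neg A)))
    (h2 : Deriv e r (insert A Γ) (.neg (.neg C))) :
    Deriv e r Γ (.neg (.neg C)) := by
  refine .negI (.negE (h1.weaken (Set.subset_insert _ _)) (.negI ?_))
  -- context : insert A (insert ¬C Γ) ⊢ ⊥
  refine .negE (h2.weaken ?_) (.hyp (Set.mem_insert_of_mem _ (Set.mem_insert _ _)))
  exact Set.insert_subset_insert (Set.subset_insert _ _)

lemma Formula.mtr_lift : ∀ (A : Formula) (k : ℕ), (A.lift k).mtr = A.mtr.lift k := by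
  intro A
  induction A with
  | pred r a => intro k; rfl
  | bot => intro k; rfl
  | top => intro k; rfl
  | neg A ih => intro k; simp [Formula.lift, Formula.mtr, ih]
  | conj A B ih1 ih2 => intro k; simp [Formula.lift, Formula.mtr, ih1, ih2]
  | disj A B ih1 ih2 => intro k; simp [Formula.lift, Formula.mtr, ih1, ih2]
  | impl A B ih1 ih2 => intro k; simp [Formula.lift, Formula.mtr, ih1, ih2]
  | all A ih => intro k; simp [Formula.lift, Formula.mtr, ih]
  | ex A ih => intro k; simp [Formula.lift, Formula.mtr, ih]

lemma Formula.mtr_subst : ∀ (A : Formula) (k : ℕ) (t : Term),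
    (A.subst k t).mtr = A.mtr.subst k t := by
  intro A
  induction A with
  | pred r a => intro k t; rfl
  | bot => intro k t; rfl
  | top => intro k t; rfl
  | neg A ih => intro k t; simp [Formula.subst, Formula.mtr, ih]
  | conj A B ih1 ih2 => intro k t; simp [Formula.subst, Formula.mtr, ih1, ih2]
  | disj A B ih1 ih2 => intro k t; simp [Formula.subst, Formula.mtr, ih1, ih2]
  | impl A B ih1 ih2 => intro k t; simp [Formula.subst, Formula.mtr, ih1, ih2]
  | all A ih => intro k t; simp [Formula.subst, Formula.mtr, ih]
  | ex A ih => intro k t; simp [Formula.subst, Formula.mtr, ih]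

lemma Formula.mtr_eq_self : ∀ (A : Formula), A.forallFree → A.impFree → A.mtr = A := by
  intro A
  induction A with
  | pred r a => intro _ _; rfl
  | bot => intro _ _; rfl
  | top => intro _ _; rfl
  | neg A ih => intro h1 h2; simp [Formula.mtr, ih h1 h2]
  | conj A B ih1 ih2 =>
      intro h1 h2
      simp [Formula.mtr, ih1 h1.1 h2.1, ih2 h1.2 h2.2]
  | disj A B ih1 ih2 =>
      intro h1 h2
      simp [Formula.mtr, ih1 h1.1 h2.1, ih2 h1.2 h2.2]
  | impl A B _ _ => intro _ h2; exact absurd h2 (by simp [Formula.impFree])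
  | all A _ => intro h1 _; exact absurd h1 (by simp [Formula.forallFree])
  | ex A ih => intro h1 h2; simp [Formula.mtr, ih h1 h2]

/-- The Glivenko-style core: a classical derivation of `A` yields a minimal
derivation of `¬¬A.mtr` from translated hypotheses. -/
lemma glivenko_core {Γ : Set Formula} {A : Formula} (h : Deriv false true Γ A) :
    Deriv false false (Formula.mtr '' Γ) (.neg (.neg A.mtr)) := by
  induction h with
  | @hyp Γ A hm => exact Deriv.dni (.hyp ⟨A, hm, rfl⟩)
  | topI => exact Deriv.dni .topI
  | @negI Γ A _ ih =>
      rw [Set.image_insert_eq] at ih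
      refine Deriv.dni (.negI ?_)
      exact ih.ofNNbot
  | @negE Γ A _ _ ih1 ih2 =>
      refine ih1.bindNN (Deriv.bindNN (ih2.weaken (Set.subset_insert _ _)) ?_)
      refine Deriv.dni (.negE (.hyp (Set.mem_insert_of_mem _ (Set.mem_insert _ _)))
        (.hyp (Set.mem_insert _ _)))
  | @conjI Γ A B _ _ ih1 ih2 =>
      refine ih1.bindNN (Deriv.bindNN (ih2.weaken (Set.subset_insert _ _)) ?_)
      exact Deriv.dni (.conjI (.hyp (Set.mem_insert_of_mem _ (Set.mem_insert _ _)))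
        (.hyp (Set.mem_insert _ _)))
  | conjE1 _ ih => exact ih.bindNN (Deriv.dni (.conjE1 (.hyp (Set.mem_insert _ _))))
  | conjE2 _ ih => exact ih.bindNN (Deriv.dni (.conjE2 (.hyp (Set.mem_insert _ _))))
  | disjI1 _ ih => exact ih.bindNN (Deriv.dni (.disjI1 (.hyp (Set.mem_insert _ _))))
  | disjI2 _ ih => exact ih.bindNN (Deriv.dni (.disjI2 (.hyp (Set.mem_insert _ _))))
  | @disjE Γ A B C _ _ _ ih1 ih2 ih3 =>
      rw [Set.image_insert_eq] at ih2 ih3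
      refine ih1.bindNN (.disjE (.hyp (Set.mem_insert _ _)) ?_ ?_)
      · exact ih2.weaken (Set.insert_subset_insert (Set.subset_insert _ _))
      · exact ih3.weaken (Set.insert_subset_insert (Set.subset_insert _ _))
  | @implI Γ A B _ ih =>
      rw [Set.image_insert_eq] at ih
      -- goal: ¬¬(¬A' ∨ B')
      refine .negI (.negE (.hyp (Set.mem_insert _ _)) (.disjI1 (.negI ?_)))
      -- ctx Γ2 := insert A' (insert ¬(¬A'∨B') Δ) ⊢ ⊥
      refine .negE (ih.weaken (Set.insert_subset_insert (Set.subset_insert _ _))) (.negI ?_)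
      refine .negE (.hyp (Set.mem_insert_of_mem _ (Set.mem_insert_of_mem _
        (Set.mem_insert _ _)))) (.disjI2 (.hyp (Set.mem_insert _ _)))
  | @implE Γ A B _ _ ih1 ih2 =>
      refine ih1.bindNN (.disjE (.hyp (Set.mem_insert _ _)) ?_ ?_)
      · -- case ¬A' : derive ¬¬B' from ⊥
        refine .negI (.negE ?_ (.hyp (Set.mem_insert_of_mem _ (Set.mem_insert _ _))))
        exact ih2.weaken (fun x hx => Set.mem_insert_of_mem _
          (Set.mem_insert_of_mem _ (Set.mem_insert_of_mem _ hx)))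
      · exact Deriv.dni (.hyp (Set.mem_insert _ _))
  | @allI Γ A _ ih =>
      rw [Set.image_image] at ih
      simp only [Formula.mtr_lift] at ih
      rw [← Set.image_image] at ih
      -- ih : Deriv ff ff (Formula.lift 0 '' (mtr '' Γ)) (nn A.mtr)
      refine Deriv.dni (.negI ?_)
      -- ctx : insert (∃¬A') Δ ⊢ ⊥
      refine .exE (.hyp (Set.mem_insert _ _)) ?_
      -- ctx : insert ¬A' (lift '' insert (∃¬A') Δ) ⊢ ⊥  (as ⊥.lift 0)
      show Deriv false false _ .bot
      refine .negE (ih.weaken ?_) (.hyp (Set.mem_insert _ _))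
      rw [Set.image_insert_eq]
      exact fun x hx => Set.mem_insert_of_mem _ (Set.mem_insert_of_mem _ hx)
  | @allE Γ A t _ ih =>
      rw [show (A.subst 0 t).mtr = A.mtr.subst 0 t from Formula.mtr_subst A 0 t]
      refine .negI ?_
      -- ctx : insert ¬(A'[t]) Δ ⊢ ⊥
      refine .negE (ih.weaken (Set.subset_insert _ _)) (Deriv.dni ?_)
      exact .exI t (.hyp (Set.mem_insert _ _))
  | @exI Γ A t _ ih =>
      rw [show (A.subst 0 t).mtr = A.mtr.subst 0 t from Formula.mtr_subst A 0 t] at ih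
      refine .negI ?_
      refine .negE (ih.weaken (Set.subset_insert _ _)) (.negI ?_)
      -- ctx : insert A'[t] (insert ¬∃A' Δ) ⊢ ⊥
      refine .negE (.hyp (Set.mem_insert_of_mem _ (Set.mem_insert _ _)))
        (.exI t (.hyp (Set.mem_insert _ _)))
  | @exE Γ A C _ _ ih1 ih2 =>
      rw [Set.image_insert_eq, Set.image_image] at ih2
      simp only [Formula.mtr_lift] at ih2
      rw [← Set.image_image] at ih2
      -- ih2 : insert A' (lift '' Δ) ⊢ nn (C'.lift 0)... mtr of (C.lift 0)
      refine .negI ?_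
      -- ctx Γ1 := insert ¬C' Δ ⊢ ⊥
      refine .negE (ih1.weaken (Set.subset_insert _ _)) (.negI ?_)
      -- ctx Γ2 := insert ∃A' Γ1 ⊢ ⊥
      refine .exE (.hyp (Set.mem_insert _ _)) ?_
      show Deriv false false _ .bot
      rw [Set.image_insert_eq, Set.image_insert_eq]
      -- ctx : insert A' (insert (lift ∃A') (insert (lift ¬C') (lift '' Δ)))
      refine .negE (ih2.weaken ?_) ?_
      · refine Set.insert_subset_insert (fun x hx => Set.mem_insert_of_mem _
          (Set.mem_insert_of_mem _ hx))
      · exact .hyp (Set.mem_insert_of_mem _ (Set.mem_insert_of_mem _ (Set.mem_insert _ _)))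
  | efqR he _ _ => exact absurd he (by simp)
  | @raaR Γ A _ _ ih =>
      rw [Set.image_insert_eq] at ih
      exact .negI ih.ofNNbot

/-- Minimal derivability implies classical derivability. -/
lemma nm_to_nk {Γ : Set Formula} {A : Formula} (h : Deriv false false Γ A) :
    Deriv false true Γ A := by
  induction h with
  | hyp hm => exact .hyp hm
  | topI => exact .topI
  | negI _ ih => exact .negI ih
  | negE _ _ ih1 ih2 => exact .negE ih1 ih2
  | conjI _ _ ih1 ih2 => exact .conjI ih1 ih2
  | conjE1 _ ih => exact .conjE1 ih
  | conjE2 _ ih => exact .conjE2 ih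
  | disjI1 _ ih => exact .disjI1 ih
  | disjI2 _ ih => exact .disjI2 ih
  | disjE _ _ _ ih1 ih2 ih3 => exact .disjE ih1 ih2 ih3
  | implI _ ih => exact .implI ih
  | implE _ _ ih1 ih2 => exact .implE ih1 ih2
  | allI _ ih => exact .allI ih
  | allE t _ ih => exact .allE t ih
  | exI t _ ih => exact .exI t ih
  | exE _ _ ih1 ih2 => exact .exE ih1 ih2
  | efqR he _ _ => exact absurd he (by simp)
  | raaR hr _ _ => exact absurd hr (by simp)

/-- For negated formulas in the →,∀-free fragment, classical and minimal
derivability coincide. -/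
theorem glivenko_minimal_neg (Γ : Set Formula) (B : Formula)
    (hB : (Formula.neg B).forallFree ∧ (Formula.neg B).impFree)
    (hΓ : ∀ C ∈ Γ, C.forallFree ∧ C.impFree) :
    NK Γ (.neg B) ↔ NM Γ (.neg B) := by
  constructor
  · intro h
    have hmain := glivenko_core h
    have himg : Formula.mtr '' Γ = Γ := by
      have : ∀ C ∈ Γ, C.mtr = C := fun C hC =>
        Formula.mtr_eq_self C (hΓ C hC).1 (hΓ C hC).2
      rw [show Formula.mtr '' Γ = id '' Γ from Set.image_congr this, Set.image_id]
    have hBeq : B.mtr = B := Formula.mtr_eq_self B hB.1 hB.2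
    rw [himg] at hmain
    simp only [Formula.mtr, hBeq] at hmain
    -- hmain : Γ ⊢ ¬¬¬B ; conclude Γ ⊢ ¬B
    refine .negI ?_
    exact .negE (hmain.weaken (Set.subset_insert _ _)) (Deriv.dni (.hyp (Set.mem_insert _ _)))
  · exact nm_to_nk
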